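/- For all natural numbers n, N with 1 ≤ n ≤ 2^N and every nonnegative integer x, one has E_n(x + 2^{N+2}) ≡ E_n(x) (mod 4), and moreover 2·E_n(x + 2^{N+1}) ≡ 2·E_n(x) (mod 4). -/

import Mathlib

noncomputable def Efun (n : ℕ) (x : ℚ) : ℚ :=
  (2 / (Nat.factorial (2 * n) : ℚ)) * ∏ ℓ ∈ Finset.range n, (x ^ 2 - (ℓ : ℚ) ^ 2)

open Finset

lemma descFactorial_cast_prod (m k : ℕ) :
    ((m.descFactorial k : ℚ)) = ∏ i ∈ Finset.range k, ((m : ℚ) - i) := by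
  induction k with
  | zero => simp
  | succ k ih =>
    rw [Nat.descFactorial_succ, prod_range_succ, Nat.cast_mul, ih]
    rcases le_or_gt k m with h | h
    · rw [Nat.cast_sub h]; ring
    · have h0 : (∏ i ∈ Finset.range k, ((m : ℚ) - i)) = 0 :=
        Finset.prod_eq_zero (Finset.mem_range.mpr h) (by simp)
      rw [h0]; ring

lemma prod_shift (n : ℕ) : ∀ x : ℚ, ∏ i ∈ Finset.range n, (x + n - i) =
    ∏ i ∈ Finset.range n, (x + 1 + i) := by
  induction n with
  | zero => simp
  | succ n ih =>
    intro x
    rw [prod_range_succ, prod_range_succ']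
    have h1 : ∏ i ∈ Finset.range n, (x + (n+1 : ℕ) - i)
        = ∏ i ∈ Finset.range n, ((x+1) + n - i) :=
      Finset.prod_congr rfl fun i _ => by push_cast; ring
    rw [h1, ih (x+1)]
    have h2 : ∏ i ∈ Finset.range n, (x + 1 + 1 + i)
        = ∏ i ∈ Finset.range n, (x + 1 + ((i : ℕ) + 1 : ℕ)) :=
      Finset.prod_congr rfl fun i _ => by push_cast; ring
    rw [h2]
    push_cast
    ring

lemma key_prod (n : ℕ) (hn : 1 ≤ n) (x : ℚ) :
    (∏ i ∈ Finset.range (2*n), (x + n - i)) + (∏ i ∈ Finset.range (2*n), (x + n - 1 - i))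
      = 2 * ∏ ℓ ∈ Finset.range n, (x ^ 2 - (ℓ : ℚ) ^ 2) := by
  have hsplit1 : (∏ i ∈ Finset.range (2*n), (x + n - i))
      = (∏ i ∈ Finset.range n, (x + 1 + i)) * (∏ i ∈ Finset.range n, (x - i)) := by
    rw [two_mul, prod_range_add, ← prod_shift]
    congr 1
    exact Finset.prod_congr rfl fun i _ => by push_cast; ring
  have hsplit2 : (∏ i ∈ Finset.range (2*n), (x + n - 1 - i))
      = (∏ i ∈ Finset.range n, (x + i)) * (∏ i ∈ Finset.range n, (x - 1 - i)) := by
    rw [two_mul, prod_range_add]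
    congr 1
    · have h1 : ∏ i ∈ Finset.range n, (x + n - 1 - i)
          = ∏ i ∈ Finset.range n, ((x-1) + n - i) :=
        Finset.prod_congr rfl fun i _ => by ring
      rw [h1, prod_shift]
      exact Finset.prod_congr rfl fun i _ => by ring
    · exact Finset.prod_congr rfl fun i _ => by push_cast; ring
  have hPQ : (∏ ℓ ∈ Finset.range n, (x ^ 2 - (ℓ : ℚ) ^ 2))
      = (∏ i ∈ Finset.range n, (x + i)) * (∏ i ∈ Finset.range n, (x - i)) := by
    rw [← prod_mul_distrib]
    exact Finset.prod_congr rfl fun i _ => by ring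
  rw [hsplit1, hsplit2, hPQ]
  set P := ∏ i ∈ Finset.range n, (x + i) with hP
  set Q := ∏ i ∈ Finset.range n, (x - i) with hQ
  rcases eq_or_ne x 0 with hx | hx
  · have hP0 : P = 0 := by
      rw [hP]
      refine Finset.prod_eq_zero (Finset.mem_range.mpr hn) ?_
      simp [hx]
    have hQ0 : Q = 0 := by
      rw [hQ]
      refine Finset.prod_eq_zero (Finset.mem_range.mpr hn) ?_
      simp [hx]
    rw [hP0, hQ0]; ring
  · apply mul_left_cancel₀ hx
    have h1 : x * ∏ i ∈ Finset.range n, (x + 1 + i) = (x + n) * P := by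
      have a1 : ∏ i ∈ Finset.range (n+1), (x + i) = P * (x + n) := by
        rw [prod_range_succ]
      have a2 : ∏ i ∈ Finset.range (n+1), (x + i)
          = (∏ i ∈ Finset.range n, (x + ((i : ℕ) + 1 : ℕ))) * (x + (0 : ℕ)) := by
        rw [prod_range_succ']
      have a3 : (∏ i ∈ Finset.range n, (x + ((i : ℕ) + 1 : ℕ)))
          = ∏ i ∈ Finset.range n, (x + 1 + i) :=
        Finset.prod_congr rfl fun i _ => by push_cast; ring
      rw [a3] at a2
      rw [a1] at a2
      push_cast at a2 ⊢
      linarith [a2]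
    have h2 : x * ∏ i ∈ Finset.range n, (x - 1 - i) = (x - n) * Q := by
      have a1 : ∏ i ∈ Finset.range (n+1), (x - i) = Q * (x - n) := by
        rw [prod_range_succ]
      have a2 : ∏ i ∈ Finset.range (n+1), (x - i)
          = (∏ i ∈ Finset.range n, (x - ((i : ℕ) + 1 : ℕ))) * (x - (0 : ℕ)) := by
        rw [prod_range_succ']
      have a3 : (∏ i ∈ Finset.range n, (x - ((i : ℕ) + 1 : ℕ)))
          = ∏ i ∈ Finset.range n, (x - 1 - i) :=
        Finset.prod_congr rfl fun i _ => by push_cast; ring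
      rw [a3] at a2
      rw [a1] at a2
      push_cast at a2 ⊢
      linarith [a2]
    linear_combination Q * h1 + P * h2

lemma Efun_eq_choose (n : ℕ) (hn : 1 ≤ n) (x : ℕ) :
    Efun n (x : ℚ) = (((x + n).choose (2*n) + (x + n - 1).choose (2*n) : ℕ) : ℚ) := by
  have hd1 : (((x+n).descFactorial (2*n) : ℕ) : ℚ) = ∏ i ∈ Finset.range (2*n), ((x:ℚ) + n - i) := by
    rw [descFactorial_cast_prod]
    exact Finset.prod_congr rfl fun i _ => by push_cast; ring
  have hd2 : (((x+n-1).descFactorial (2*n) : ℕ) : ℚ)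
      = ∏ i ∈ Finset.range (2*n), ((x:ℚ) + n - 1 - i) := by
    rw [descFactorial_cast_prod]
    refine Finset.prod_congr rfl fun i _ => ?_
    have : ((x + n - 1 : ℕ) : ℚ) = (x : ℚ) + n - 1 := by
      have h1 : 1 ≤ x + n := by omega
      push_cast [Nat.cast_sub h1]
      ring
    rw [this]
  have hfac : ((2*n).factorial : ℚ) ≠ 0 := Nat.cast_ne_zero.mpr (Nat.factorial_ne_zero _)
  have key := key_prod n hn (x : ℚ)
  rw [Efun, div_mul_eq_mul_div, div_eq_iff hfac, ← key, ← hd1, ← hd2]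
  rw [Nat.descFactorial_eq_factorial_mul_choose, Nat.descFactorial_eq_factorial_mul_choose]
  push_cast
  ring

lemma four_dvd_choose (N j : ℕ) (h1 : 1 ≤ j) (h2 : j ≤ 2^(N+2)) (h3 : ¬ (2^(N+1) ∣ j)) :
    4 ∣ (2^(N+2)).choose j := by
  have hpow : 1 ≤ 2^(N+2) := Nat.one_le_two_pow
  have key := Nat.add_one_mul_choose_eq (2^(N+2) - 1) (j - 1)
  have e1 : Nat.succ (2^(N+2) - 1) = 2^(N+2) := by omega
  have e2 : Nat.succ (j - 1) = j := by omega
  have e3 : (2^(N+2) - 1) + 1 = 2^(N+2) := by omega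
  have e4 : (j - 1) + 1 = j := by omega
  rw [e3, e4] at key
  -- key : 2^(N+2) * (2^(N+2)-1).choose (j-1) = (2^(N+2)).choose j * j
  have hCpos : 0 < (2^(N+2)).choose j := Nat.choose_pos h2
  have hC'pos : 0 < (2^(N+2)-1).choose (j-1) := Nat.choose_pos (by omega)
  have hC' : (2^(N+2)-1).choose (j-1) ≠ 0 := by omega
  have hj : j ≠ 0 := by omega
  have hCne : (2^(N+2)).choose j ≠ 0 := by omega
  have hfj : j.factorization 2 ≤ N := by
    by_contra hcon
    push_neg at hcon
    exact h3 ((Nat.Prime.pow_dvd_iff_le_factorization Nat.prime_two hj).mpr hcon)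
  have hfkey := congrArg (fun t => t.factorization 2) key
  simp only [Nat.factorization_mul (by positivity : (2:ℕ)^(N+2) ≠ 0) hC',
    Nat.factorization_mul hCne hj, Nat.Prime.factorization_pow Nat.prime_two,
    Finsupp.coe_add, Pi.add_apply, Finsupp.single_apply, if_pos rfl, if_true] at hfkey
  have hge : 2 ≤ ((2^(N+2)).choose j).factorization 2 := by omega
  have := (Nat.Prime.pow_dvd_iff_le_factorization Nat.prime_two hCne).mpr hge
  simpa using this

set_option maxHeartbeats 1000000 in
lemma generic_mod (n N a d : ℕ) (hn : 1 ≤ n) (hnN : n ≤ 2^N) (m : ℕ)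
    (h1 : ∀ j, 1 ≤ j → j ≤ 2^(N+1) → j ≠ 2^(N+1) → d ∣ (2^a).choose j)
    (h2 : d ∣ 2 * (2^a).choose (2^(N+1))) :
    ((m + 2^a).choose (2*n) + (m - 1 + 2^a).choose (2*n)) ≡
      (m.choose (2*n) + (m-1).choose (2*n)) [MOD d] := by
  have h2n : 2*n ≤ 2^(N+1) := by
    have hp : (2:ℕ)^(N+1) = 2^N * 2 := pow_succ 2 N
    omega
  have expand : ∀ y : ℕ, (y + 2^a).choose (2*n)
      = (∑ i ∈ Finset.range (2*n), y.choose i * (2^a).choose (2*n - i)) + y.choose (2*n) := by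
    intro y
    rw [Nat.add_choose_eq, Finset.Nat.sum_antidiagonal_eq_sum_range_succ_mk,
      Finset.sum_range_succ]
    simp
  rw [expand m, expand (m-1)]
  have hdvd : d ∣ (∑ i ∈ Finset.range (2*n), m.choose i * (2^a).choose (2*n - i))
      + ∑ i ∈ Finset.range (2*n), (m-1).choose i * (2^a).choose (2*n - i) := by
    rw [← Finset.sum_add_distrib]
    apply Finset.dvd_sum
    intro i hi
    have hi' := Finset.mem_range.mp hi
    rcases eq_or_ne (2*n - i) (2^(N+1)) with hj | hj
    · have hi0 : i = 0 := by omega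
      subst hi0
      simp only [Nat.choose_zero_right, one_mul, hj]
      obtain ⟨c, hc⟩ := h2
      exact ⟨c, by omega⟩
    · have hd4 := h1 (2*n - i) (by omega) (by omega) hj
      rw [← add_mul]
      exact Dvd.dvd.mul_left hd4 _
  have base := Nat.ModEq.add_right (m.choose (2*n) + (m-1).choose (2*n))
    ((Nat.modEq_zero_iff_dvd).mpr hdvd)
  rw [zero_add] at base
  calc (∑ i ∈ Finset.range (2*n), m.choose i * (2^a).choose (2*n - i)) + m.choose (2*n)
        + ((∑ i ∈ Finset.range (2*n), (m-1).choose i * (2^a).choose (2*n - i))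
          + (m-1).choose (2*n))
      = ((∑ i ∈ Finset.range (2*n), m.choose i * (2^a).choose (2*n - i))
          + ∑ i ∈ Finset.range (2*n), (m-1).choose i * (2^a).choose (2*n - i))
        + (m.choose (2*n) + (m-1).choose (2*n)) := by ring
    _ ≡ m.choose (2*n) + (m-1).choose (2*n) [MOD d] := base

theorem stmt7 : ∀ n N : ℕ, 1 ≤ n → n ≤ 2 ^ N → ∀ x : ℕ,
    (∃ z : ℤ, Efun n ((x : ℚ) + 2 ^ (N + 2)) - Efun n (x : ℚ) = 4 * z) ∧
    (∃ z : ℤ, 2 * Efun n ((x : ℚ) + 2 ^ (N + 1)) - 2 * Efun n (x : ℚ) = 4 * z) := by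
  intro n N hn hN x
  constructor
  · have h2 : (4:ℕ) ∣ 2 * (2^(N+2)).choose (2^(N+1)) := by
      have hne : (2:ℕ)^(N+1) ≠ 2^(N+2) := by
        have := Nat.pow_lt_pow_right (a := 2) one_lt_two (show N+1 < N+2 by omega)
        omega
      obtain ⟨c, hc⟩ := Nat.Prime.dvd_choose_pow Nat.prime_two
        (by positivity : (2:ℕ)^(N+1) ≠ 0) hne
      exact ⟨c, by omega⟩
    have h1 : ∀ j, 1 ≤ j → j ≤ 2^(N+1) → j ≠ 2^(N+1) → 4 ∣ (2^(N+2)).choose j := by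
      intro j hj1 hj2 hj3
      apply four_dvd_choose N j hj1
        (le_trans hj2 (Nat.pow_le_pow_right (by norm_num) (by omega)))
      intro hd
      have := Nat.le_of_dvd (by omega) hd
      omega
    have hmod := generic_mod n N (N+2) 4 hn hN (x+n) h1 h2
    have e1 : x + n + 2^(N+2) = x + 2^(N+2) + n := by omega
    have e2 : x + n - 1 + 2^(N+2) = x + 2^(N+2) + n - 1 := by have hp := Nat.one_le_two_pow (n := N+2); omega
    rw [e1, e2] at hmod
    obtain ⟨z, hz⟩ := Nat.ModEq.dvd hmod
    refine ⟨-z, ?_⟩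
    have e0 : (x:ℚ) + 2^(N+2) = ((x + 2^(N+2) : ℕ) : ℚ) := by push_cast; ring
    rw [e0, Efun_eq_choose n hn, Efun_eq_choose n hn]
    have hq := congrArg (fun t : ℤ => (t : ℚ)) hz
    push_cast at hq ⊢
    linarith
  · have h2 : (2:ℕ) ∣ 2 * (2^(N+1)).choose (2^(N+1)) := dvd_mul_right 2 _
    have h1 : ∀ j, 1 ≤ j → j ≤ 2^(N+1) → j ≠ 2^(N+1) → 2 ∣ (2^(N+1)).choose j := by
      intro j hj1 hj2 hj3
      exact Nat.Prime.dvd_choose_pow Nat.prime_two (by omega) hj3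
    have hmod := generic_mod n N (N+1) 2 hn hN (x+n) h1 h2
    have e1 : x + n + 2^(N+1) = x + 2^(N+1) + n := by omega
    have e2 : x + n - 1 + 2^(N+1) = x + 2^(N+1) + n - 1 := by have hp := Nat.one_le_two_pow (n := N+1); omega
    rw [e1, e2] at hmod
    obtain ⟨z, hz⟩ := Nat.ModEq.dvd hmod
    refine ⟨-z, ?_⟩
    have e0 : (x:ℚ) + 2^(N+1) = ((x + 2^(N+1) : ℕ) : ℚ) := by push_cast; ring
    rw [e0, Efun_eq_choose n hn, Efun_eq_choose n hn]
    have hq := congrArg (fun t : ℤ => (t : ℚ)) hz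
    push_cast at hq ⊢
    linarith
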